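/- Let F be the free group on two generators a, b, and let K be the subgroup of F generated by the set { aᵏ bˡ a b⁻ˡ a⁻ᵏ : k, l ∈ ℤ, l ≠ 0 }. Then the pair (F,K) is context-free: with Σ = {a, a⁻¹, b, b⁻¹} and ψ : Σ → F the natural map sending each letter to the corresponding generator or its inverse, the language { w ∈ Σ* : ψ(w) ∈ K } is context-free. (The associated Schreier graph is the comb lattice, a tree with loops added, which is a context-free graph.) -/

import Mathlib

/-- The generator `a` of the free group on two generators. -/
def fga : FreeGroup (Fin 2) := FreeGroup.of 0

/-- The generator `b` of the free group on two generators. -/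
def fgb : FreeGroup (Fin 2) := FreeGroup.of 1

/-- The subgroup `K` of `F = F(a,b)` freely generated by
`{ aᵏ bˡ a b⁻ˡ a⁻ᵏ : k, l ∈ ℤ, l ≠ 0 }`; its Schreier graph is the comb lattice. -/
def combSubgroup : Subgroup (FreeGroup (Fin 2)) :=
  Subgroup.closure
    {x | ∃ k l : ℤ, l ≠ 0 ∧ x = fga ^ k * fgb ^ l * fga * fgb ^ (-l) * fga ^ (-k)}

/-- The natural symmetric semigroup presentation of the free group on `a, b`. -/
def psiComb : Fin 4 → FreeGroup (Fin 2) := ![fga, fga⁻¹, fgb, fgb⁻¹]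


namespace CombCF

/-- step in b-height -/
def dlt : Fin 4 → ℤ := ![0, 0, 1, -1]
/-- sign of a-letters -/
def asg : Fin 4 → ℤ := ![1, -1, 0, 0]

def Hb : List (Fin 4) → ℤ
  | [] => 0
  | c :: t => dlt c + Hb t

def mH : List (Fin 4) → ℤ
  | [] => 0
  | c :: t => min 0 (dlt c + mH t)

def xH : List (Fin 4) → ℤ
  | [] => 0
  | c :: t => max 0 (dlt c + xH t)

def Ac : List (Fin 4) → ℤ → ℤ
  | [], _ => 0
  | c :: t, m => (if m = 0 then asg c else 0) + Ac t (m - dlt c)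

@[simp] lemma Hb_nil : Hb [] = 0 := rfl
@[simp] lemma Hb_cons (c t) : Hb (c :: t) = dlt c + Hb t := rfl
@[simp] lemma mH_nil : mH [] = 0 := rfl
@[simp] lemma mH_cons (c t) : mH (c :: t) = min 0 (dlt c + mH t) := rfl
@[simp] lemma xH_nil : xH [] = 0 := rfl
@[simp] lemma xH_cons (c t) : xH (c :: t) = max 0 (dlt c + xH t) := rfl
@[simp] lemma Ac_nil (m) : Ac [] m = 0 := rfl
@[simp] lemma Ac_cons (c t m) : Ac (c :: t) m = (if m = 0 then asg c else 0) + Ac t (m - dlt c) := rfl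

lemma mH_nonpos (w : List (Fin 4)) : mH w ≤ 0 := by
  cases w with
  | nil => simp
  | cons c t => simp

lemma xH_nonneg (w : List (Fin 4)) : 0 ≤ xH w := by
  cases w with
  | nil => simp
  | cons c t => simp

lemma Hb_append (u v : List (Fin 4)) : Hb (u ++ v) = Hb u + Hb v := by
  induction u with
  | nil => simp
  | cons c t ih => simp [ih]; ring

lemma mH_append (u v : List (Fin 4)) : mH (u ++ v) = min (mH u) (Hb u + mH v) := by
  induction u with
  | nil => simp [min_eq_right (mH_nonpos v)]
  | cons c t ih => simp [ih]; omega

lemma xH_append (u v : List (Fin 4)) : xH (u ++ v) = max (xH u) (Hb u + xH v) := by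
  induction u with
  | nil => simp [max_eq_right (xH_nonneg v)]
  | cons c t ih => simp [ih]; omega

lemma Ac_append (u v : List (Fin 4)) (m : ℤ) :
    Ac (u ++ v) m = Ac u m + Ac v (m - Hb u) := by
  induction u generalizing m with
  | nil => simp
  | cons c t ih => simp [ih]; ring_nf

lemma Ac_eq_zero_of_lt_mH {w : List (Fin 4)} {m : ℤ} (h : m < mH w) : Ac w m = 0 := by
  induction w generalizing m with
  | nil => simp
  | cons c t ih =>
    simp only [mH_cons] at h
    have h1 : m < 0 := lt_of_lt_of_le h (min_le_left _ _)
    have h2 : m - dlt c < mH t := by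
      have := lt_of_lt_of_le h (min_le_right _ _); omega
    simp [ih h2, h1.ne]

lemma Ac_eq_zero_of_xH_lt {w : List (Fin 4)} {m : ℤ} (h : xH w < m) : Ac w m = 0 := by
  induction w generalizing m with
  | nil => simp
  | cons c t ih =>
    simp only [xH_cons] at h
    have h1 : 0 < m := lt_of_le_of_lt (le_max_left _ _) h
    have h2 : xH t < m - dlt c := by
      have := lt_of_le_of_lt (le_max_right _ _) h; omega
    simp [ih h2, h1.ne']

end CombCF
namespace CombCF

lemma firstDropAux : ∀ (n : ℕ) (t : List (Fin 4)), t.length ≤ n → Hb t < 0 →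
    ∃ x s, t = x ++ 3 :: s ∧ Hb x = 0 ∧ mH x = 0 := by
  intro n
  induction n with
  | zero =>
    intro t ht h
    have : t = [] := List.eq_nil_of_length_eq_zero (Nat.le_zero.mp ht)
    subst this; simp at h
  | succ n ih =>
    intro t ht h
    match t with
    | [] => simp at h
    | c :: t' =>
      simp only [List.length_cons, Nat.succ_le_succ_iff] at ht
      fin_cases c
      · -- c = 0
        have h' : Hb t' < 0 := by simp [dlt] at h ⊢; omega
        obtain ⟨x, s, rfl, hx, hmx⟩ := ih t' ht h'
        exact ⟨0 :: x, s, by simp, by simp [dlt, hx], by simp [dlt, hmx, mH_nonpos]⟩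
      · -- c = 1
        have h' : Hb t' < 0 := by simp [dlt] at h ⊢; omega
        obtain ⟨x, s, rfl, hx, hmx⟩ := ih t' ht h'
        exact ⟨1 :: x, s, by simp, by simp [dlt, hx], by simp [dlt, hmx, mH_nonpos]⟩
      · -- c = 2
        have h' : Hb t' < 0 := by simp [dlt] at h ⊢; omega
        obtain ⟨x, s, rfl, hx, hmx⟩ := ih t' ht h'
        have hs : Hb s < 0 := by
          simp only [Hb_cons, Hb_append] at h
          simp [dlt] at h; omega
        have hslen : s.length ≤ n := by
          rw [List.length_append, List.length_cons] at ht; omega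
        obtain ⟨x2, s2, rfl, hx2, hmx2⟩ := ih s hslen hs
        refine ⟨2 :: (x ++ 3 :: x2), s2, by simp, ?_, ?_⟩
        · simp [dlt, Hb_append, hx, hx2]
        · simp [dlt, mH_append, Hb_append, hx, hx2, hmx, hmx2]
      · -- c = 3
        exact ⟨[], t', rfl, rfl, rfl⟩

lemma firstDrop {t : List (Fin 4)} (h : Hb t < 0) :
    ∃ x s, t = x ++ 3 :: s ∧ Hb x = 0 ∧ mH x = 0 :=
  firstDropAux t.length t le_rfl h

lemma firstRiseAux : ∀ (n : ℕ) (t : List (Fin 4)), t.length ≤ n → 0 < Hb t →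
    ∃ x s, t = x ++ 2 :: s ∧ Hb x = 0 ∧ xH x = 0 := by
  intro n
  induction n with
  | zero =>
    intro t ht h
    have : t = [] := List.eq_nil_of_length_eq_zero (Nat.le_zero.mp ht)
    subst this; simp at h
  | succ n ih =>
    intro t ht h
    match t with
    | [] => simp at h
    | c :: t' =>
      simp only [List.length_cons, Nat.succ_le_succ_iff] at ht
      fin_cases c
      · have h' : 0 < Hb t' := by simp [dlt] at h ⊢; omega
        obtain ⟨x, s, rfl, hx, hmx⟩ := ih t' ht h'
        exact ⟨0 :: x, s, by simp, by simp [dlt, hx], by simp [dlt, hmx, xH_nonneg]⟩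
      · have h' : 0 < Hb t' := by simp [dlt] at h ⊢; omega
        obtain ⟨x, s, rfl, hx, hmx⟩ := ih t' ht h'
        exact ⟨1 :: x, s, by simp, by simp [dlt, hx], by simp [dlt, hmx, xH_nonneg]⟩
      · exact ⟨[], t', rfl, rfl, rfl⟩
      · have h' : 0 < Hb t' := by simp [dlt] at h ⊢; omega
        obtain ⟨x, s, rfl, hx, hmx⟩ := ih t' ht h'
        have hs : 0 < Hb s := by
          simp only [Hb_cons, Hb_append] at h
          simp [dlt] at h; omega
        have hslen : s.length ≤ n := by
          rw [List.length_append, List.length_cons] at ht; omega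
        obtain ⟨x2, s2, rfl, hx2, hmx2⟩ := ih s hslen hs
        refine ⟨3 :: (x ++ 2 :: x2), s2, by simp, ?_, ?_⟩
        · simp [dlt, Hb_append, hx, hx2]
        · simp [dlt, xH_append, Hb_append, hx, hx2, hmx, hmx2]

lemma firstRise {t : List (Fin 4)} (h : 0 < Hb t) :
    ∃ x s, t = x ++ 2 :: s ∧ Hb x = 0 ∧ xH x = 0 :=
  firstRiseAux t.length t le_rfl h

end CombCF
namespace CombCF

lemma firstNegAux : ∀ (N : ℕ) (t : List (Fin 4)), t.length ≤ N → ∀ n : ℤ, 0 ≤ n →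
    Hb t = 0 → Ac t 0 < -n →
    ∃ u v, t = u ++ 1 :: v ∧ Hb u = 0 ∧ Ac u 0 = -n := by
  intro N
  induction N with
  | zero =>
    intro t ht n hn _ hA
    have : t = [] := List.eq_nil_of_length_eq_zero (Nat.le_zero.mp ht)
    subst this; simp at hA; omega
  | succ N ih =>
    intro t ht n hn hH hA
    match t with
    | [] => simp at hA; omega
    | c :: t' =>
      simp only [List.length_cons, Nat.succ_le_succ_iff] at ht
      fin_cases c
      · -- c = 0
        have h1 : Hb t' = 0 := by simp [dlt] at hH ⊢; omega
        have h2 : Ac t' 0 < -(n+1) := by simp [dlt, asg] at hA ⊢; omega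
        obtain ⟨u, v, rfl, hu, hAu⟩ := ih t' ht (n+1) (by omega) h1 h2
        exact ⟨0 :: u, v, by simp, by simp [dlt, hu],
          by simp [dlt, asg, hAu]; try omega⟩
      · -- c = 1
        by_cases hn0 : n = 0
        · exact ⟨[], t', by simp, rfl, by simp [hn0]⟩
        · have h1 : Hb t' = 0 := by simp [dlt] at hH ⊢; omega
          have h2 : Ac t' 0 < -(n-1) := by simp [dlt, asg] at hA ⊢; omega
          obtain ⟨u, v, rfl, hu, hAu⟩ := ih t' ht (n-1) (by omega) h1 h2
          exact ⟨1 :: u, v, by simp, by simp [dlt, hu],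
            by simp [dlt, asg, hAu]; try omega⟩
      · -- c = 2
        have h1 : Hb t' < 0 := by simp [dlt] at hH ⊢; omega
        obtain ⟨x, s, rfl, hx, hmx⟩ := firstDrop h1
        have hxA : Ac x (-1) = 0 := Ac_eq_zero_of_lt_mH (by omega)
        have hHs : Hb s = 0 := by
          simp only [Hb_cons, Hb_append] at hH; simp [dlt] at hH; omega
        have hAs : Ac s 0 < -n := by
          simp only [Ac_cons, Ac_append] at hA
          simp [dlt, asg, hx, hxA] at hA
          convert hA using 2
          try omega
        have hslen : s.length ≤ N := by
          rw [List.length_append, List.length_cons] at ht; omega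
        obtain ⟨u, v, rfl, hu, hAu⟩ := ih s hslen n hn hHs hAs
        refine ⟨2 :: (x ++ 3 :: u), v, by simp, ?_, ?_⟩
        · simp [dlt, Hb_append, hx, hu]
        · have : Ac u (0:ℤ) = -n := hAu
          simp [dlt, asg, Ac_append, Hb_append, hx, hxA]
          convert this using 2
          try omega
      · -- c = 3
        have h1 : 0 < Hb t' := by simp [dlt] at hH ⊢; omega
        obtain ⟨x, s, rfl, hx, hmx⟩ := firstRise h1
        have hxA : Ac x 1 = 0 := Ac_eq_zero_of_xH_lt (by omega)
        have hHs : Hb s = 0 := by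
          simp only [Hb_cons, Hb_append] at hH; simp [dlt] at hH; omega
        have hAs : Ac s 0 < -n := by
          simp only [Ac_cons, Ac_append] at hA
          simp [dlt, asg, hx, hxA] at hA
          convert hA using 2
          try omega
        have hslen : s.length ≤ N := by
          rw [List.length_append, List.length_cons] at ht; omega
        obtain ⟨u, v, rfl, hu, hAu⟩ := ih s hslen n hn hHs hAs
        refine ⟨3 :: (x ++ 2 :: u), v, by simp, ?_, ?_⟩
        · simp [dlt, Hb_append, hx, hu]
        · have : Ac u (0:ℤ) = -n := hAu
          simp [dlt, asg, Ac_append, Hb_append, hx, hxA]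
          convert this using 2
          try omega

end CombCF
namespace CombCF

lemma firstPosAux : ∀ (N : ℕ) (t : List (Fin 4)), t.length ≤ N → ∀ n : ℤ, 0 ≤ n →
    Hb t = 0 → n < Ac t 0 →
    ∃ u v, t = u ++ 0 :: v ∧ Hb u = 0 ∧ Ac u 0 = n := by
  intro N
  induction N with
  | zero =>
    intro t ht n hn _ hA
    have : t = [] := List.eq_nil_of_length_eq_zero (Nat.le_zero.mp ht)
    subst this; simp at hA; omega
  | succ N ih =>
    intro t ht n hn hH hA
    match t with
    | [] => simp at hA; omega
    | c :: t' =>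
      simp only [List.length_cons, Nat.succ_le_succ_iff] at ht
      fin_cases c
      · -- c = 0
        by_cases hn0 : n = 0
        · exact ⟨[], t', by simp, rfl, by simp [hn0]⟩
        · have h1 : Hb t' = 0 := by simp [dlt] at hH ⊢; omega
          have h2 : (n-1) < Ac t' 0 := by simp [dlt, asg] at hA ⊢; omega
          obtain ⟨u, v, rfl, hu, hAu⟩ := ih t' ht (n-1) (by omega) h1 h2
          exact ⟨0 :: u, v, by simp, by simp [dlt, hu],
            by simp [dlt, asg, hAu]; try omega⟩
      · -- c = 1
        have h1 : Hb t' = 0 := by simp [dlt] at hH ⊢; omega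
        have h2 : (n+1) < Ac t' 0 := by simp [dlt, asg] at hA ⊢; omega
        obtain ⟨u, v, rfl, hu, hAu⟩ := ih t' ht (n+1) (by omega) h1 h2
        exact ⟨1 :: u, v, by simp, by simp [dlt, hu],
          by simp [dlt, asg, hAu]; try omega⟩
      · -- c = 2
        have h1 : Hb t' < 0 := by simp [dlt] at hH ⊢; omega
        obtain ⟨x, s, rfl, hx, hmx⟩ := firstDrop h1
        have hxA : Ac x (-1) = 0 := Ac_eq_zero_of_lt_mH (by omega)
        have hHs : Hb s = 0 := by
          simp only [Hb_cons, Hb_append] at hH; simp [dlt] at hH; omega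
        have hAs : n < Ac s 0 := by
          simp only [Ac_cons, Ac_append] at hA
          simp [dlt, asg, hx, hxA] at hA
          convert hA using 2
          try omega
        have hslen : s.length ≤ N := by
          rw [List.length_append, List.length_cons] at ht; omega
        obtain ⟨u, v, rfl, hu, hAu⟩ := ih s hslen n hn hHs hAs
        refine ⟨2 :: (x ++ 3 :: u), v, by simp, ?_, ?_⟩
        · simp [dlt, Hb_append, hx, hu]
        · have : Ac u (0:ℤ) = n := hAu
          simp [dlt, asg, Ac_append, Hb_append, hx, hxA]
          convert this using 2
          try omega
      · -- c = 3
        have h1 : 0 < Hb t' := by simp [dlt] at hH ⊢; omega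
        obtain ⟨x, s, rfl, hx, hmx⟩ := firstRise h1
        have hxA : Ac x 1 = 0 := Ac_eq_zero_of_xH_lt (by omega)
        have hHs : Hb s = 0 := by
          simp only [Hb_cons, Hb_append] at hH; simp [dlt] at hH; omega
        have hAs : n < Ac s 0 := by
          simp only [Ac_cons, Ac_append] at hA
          simp [dlt, asg, hx, hxA] at hA
          convert hA using 2
          try omega
        have hslen : s.length ≤ N := by
          rw [List.length_append, List.length_cons] at ht; omega
        obtain ⟨u, v, rfl, hu, hAu⟩ := ih s hslen n hn hHs hAs
        refine ⟨3 :: (x ++ 2 :: u), v, by simp, ?_, ?_⟩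
        · simp [dlt, Hb_append, hx, hu]
        · have : Ac u (0:ℤ) = n := hAu
          simp [dlt, asg, Ac_append, Hb_append, hx, hxA]
          convert this using 2
          try omega

end CombCF
namespace CombCF

inductive NTc | S | X | Y
deriving DecidableEq

instance : DecidableEq (ContextFreeRule (Fin 4) NTc) := fun a b =>
  decidable_of_iff (a.input = b.input ∧ a.output = b.output)
    (by constructor
        · rintro ⟨h1, h2⟩; cases a; cases b; simp_all
        · rintro rfl; exact ⟨rfl, rfl⟩)

open Symbol in
def rulesList : List (ContextFreeRule (Fin 4) NTc) :=
  [⟨.S, []⟩,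
   ⟨.S, [terminal 2, nonterminal .X, terminal 3, nonterminal .S]⟩,
   ⟨.S, [terminal 3, nonterminal .Y, terminal 2, nonterminal .S]⟩,
   ⟨.S, [terminal 0, nonterminal .S, terminal 1, nonterminal .S]⟩,
   ⟨.S, [terminal 1, nonterminal .S, terminal 0, nonterminal .S]⟩,
   ⟨.X, []⟩,
   ⟨.X, [terminal 0, nonterminal .X]⟩,
   ⟨.X, [terminal 1, nonterminal .X]⟩,
   ⟨.X, [terminal 2, nonterminal .X, terminal 3, nonterminal .X]⟩,
   ⟨.Y, []⟩,
   ⟨.Y, [terminal 0, nonterminal .Y]⟩,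
   ⟨.Y, [terminal 1, nonterminal .Y]⟩,
   ⟨.Y, [terminal 3, nonterminal .Y, terminal 2, nonterminal .Y]⟩]

@[reducible] def gComb : ContextFreeGrammar (Fin 4) := ⟨NTc, .S, rulesList.toFinset⟩

lemma mem_rules_of_mem_list {r : ContextFreeRule (Fin 4) NTc} (h : r ∈ rulesList) :
    r ∈ gComb.rules := by
  exact List.mem_toFinset.mpr h

lemma prod_rule {r : ContextFreeRule (Fin 4) NTc} (h : r ∈ rulesList) :
    gComb.Produces [Symbol.nonterminal r.input] r.output :=
  ⟨r, mem_rules_of_mem_list h, ContextFreeRule.Rewrites.input_output⟩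

lemma Derives_append_both {u1 v1 u2 v2 : List (Symbol (Fin 4) NTc)}
    (h1 : gComb.Derives u1 v1) (h2 : gComb.Derives u2 v2) :
    gComb.Derives (u1 ++ u2) (v1 ++ v2) :=
  (h1.append_right u2).trans (h2.append_left v1)

end CombCF
namespace CombCF

open Symbol

lemma derXAux : ∀ (N : ℕ) (w : List (Fin 4)), w.length ≤ N → Hb w = 0 → mH w = 0 →
    gComb.Derives [nonterminal .X] (w.map terminal) := by
  intro N
  induction N with
  | zero =>
    intro w hw _ _
    have : w = [] := List.eq_nil_of_length_eq_zero (Nat.le_zero.mp hw)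
    subst this
    simpa using (prod_rule (r := ⟨.X, []⟩) (by simp [rulesList])).single
  | succ N ih =>
    intro w hw hH hm
    match w with
    | [] => simpa using (prod_rule (r := ⟨.X, []⟩) (by simp [rulesList])).single
    | c :: t =>
      simp only [List.length_cons, Nat.succ_le_succ_iff] at hw
      fin_cases c
      · show gComb.Derives [nonterminal NTc.X] (((0 : Fin 4) :: t).map terminal)
        have h1 : Hb t = 0 := by simp [dlt] at hH ⊢; omega
        have h2 : mH t = 0 := by
          have := mH_nonpos t; simp [dlt] at hm ⊢; omega
        have e : ((0 : Fin 4) :: t).map (terminal : Fin 4 → Symbol (Fin 4) NTc)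
            = [terminal (0 : Fin 4)] ++ t.map terminal := by simp
        rw [e]
        exact (prod_rule (r := ⟨.X, [terminal 0, nonterminal .X]⟩)
          (by simp [rulesList])).trans_derives
          (Derives_append_both (ContextFreeGrammar.Derives.refl [terminal 0]) (ih t hw h1 h2))
      · show gComb.Derives [nonterminal NTc.X] (((1 : Fin 4) :: t).map terminal)
        have h1 : Hb t = 0 := by simp [dlt] at hH ⊢; omega
        have h2 : mH t = 0 := by
          have := mH_nonpos t; simp [dlt] at hm ⊢; omega
        have e : ((1 : Fin 4) :: t).map (terminal : Fin 4 → Symbol (Fin 4) NTc)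
            = [terminal (1 : Fin 4)] ++ t.map terminal := by simp
        rw [e]
        exact (prod_rule (r := ⟨.X, [terminal 1, nonterminal .X]⟩)
          (by simp [rulesList])).trans_derives
          (Derives_append_both (ContextFreeGrammar.Derives.refl [terminal 1]) (ih t hw h1 h2))
      · show gComb.Derives [nonterminal NTc.X] (((2 : Fin 4) :: t).map terminal)
        have h1 : Hb t < 0 := by simp [dlt] at hH ⊢; omega
        obtain ⟨x, s, rfl, hx, hmx⟩ := firstDrop h1
        have hHs : Hb s = 0 := by
          simp only [Hb_cons, Hb_append] at hH; simp [dlt] at hH; omega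
        have hms : mH s = 0 := by
          have h5 := mH_nonpos s
          simp only [mH_cons, mH_append] at hm
          simp [dlt, hx, hmx] at hm; omega
        have hxl : x.length ≤ N := by
          rw [List.length_append, List.length_cons] at hw; omega
        have hsl : s.length ≤ N := by
          rw [List.length_append, List.length_cons] at hw; omega
        have e : ((2 : Fin 4) :: (x ++ 3 :: s)).map (terminal : Fin 4 → Symbol (Fin 4) NTc)
            = [terminal (2 : Fin 4)] ++ (x.map terminal
              ++ ([terminal (3 : Fin 4)] ++ s.map terminal)) := by simp
        rw [e]
        exact (prod_rule
          (r := ⟨.X, [terminal 2, nonterminal .X, terminal 3, nonterminal .X]⟩)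
          (by simp [rulesList])).trans_derives
          (Derives_append_both (ContextFreeGrammar.Derives.refl [terminal 2])
            (Derives_append_both (ih x hxl hx hmx)
              (Derives_append_both (ContextFreeGrammar.Derives.refl [terminal 3]) (ih s hsl hHs hms))))
      · show gComb.Derives [nonterminal NTc.X] (((3 : Fin 4) :: t).map terminal)
        exfalso
        have := mH_nonpos t
        simp [dlt] at hm; omega

lemma derYAux : ∀ (N : ℕ) (w : List (Fin 4)), w.length ≤ N → Hb w = 0 → xH w = 0 →
    gComb.Derives [nonterminal .Y] (w.map terminal) := by
  intro N
  induction N with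
  | zero =>
    intro w hw _ _
    have : w = [] := List.eq_nil_of_length_eq_zero (Nat.le_zero.mp hw)
    subst this
    simpa using (prod_rule (r := ⟨.Y, []⟩) (by simp [rulesList])).single
  | succ N ih =>
    intro w hw hH hm
    match w with
    | [] => simpa using (prod_rule (r := ⟨.Y, []⟩) (by simp [rulesList])).single
    | c :: t =>
      simp only [List.length_cons, Nat.succ_le_succ_iff] at hw
      fin_cases c
      · show gComb.Derives [nonterminal NTc.Y] (((0 : Fin 4) :: t).map terminal)
        have h1 : Hb t = 0 := by simp [dlt] at hH ⊢; omega
        have h2 : xH t = 0 := by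
          have := xH_nonneg t; simp [dlt] at hm ⊢; omega
        have e : ((0 : Fin 4) :: t).map (terminal : Fin 4 → Symbol (Fin 4) NTc)
            = [terminal (0 : Fin 4)] ++ t.map terminal := by simp
        rw [e]
        exact (prod_rule (r := ⟨.Y, [terminal 0, nonterminal .Y]⟩)
          (by simp [rulesList])).trans_derives
          (Derives_append_both (ContextFreeGrammar.Derives.refl [terminal 0]) (ih t hw h1 h2))
      · show gComb.Derives [nonterminal NTc.Y] (((1 : Fin 4) :: t).map terminal)
        have h1 : Hb t = 0 := by simp [dlt] at hH ⊢; omega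
        have h2 : xH t = 0 := by
          have := xH_nonneg t; simp [dlt] at hm ⊢; omega
        have e : ((1 : Fin 4) :: t).map (terminal : Fin 4 → Symbol (Fin 4) NTc)
            = [terminal (1 : Fin 4)] ++ t.map terminal := by simp
        rw [e]
        exact (prod_rule (r := ⟨.Y, [terminal 1, nonterminal .Y]⟩)
          (by simp [rulesList])).trans_derives
          (Derives_append_both (ContextFreeGrammar.Derives.refl [terminal 1]) (ih t hw h1 h2))
      · show gComb.Derives [nonterminal NTc.Y] (((2 : Fin 4) :: t).map terminal)
        exfalso
        have := xH_nonneg t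
        simp [dlt] at hm; omega
      · show gComb.Derives [nonterminal NTc.Y] (((3 : Fin 4) :: t).map terminal)
        have h1 : 0 < Hb t := by simp [dlt] at hH ⊢; omega
        obtain ⟨x, s, rfl, hx, hmx⟩ := firstRise h1
        have hHs : Hb s = 0 := by
          simp only [Hb_cons, Hb_append] at hH; simp [dlt] at hH; omega
        have hms : xH s = 0 := by
          have h5 := xH_nonneg s
          simp only [xH_cons, xH_append] at hm
          simp [dlt, hx, hmx] at hm; omega
        have hxl : x.length ≤ N := by
          rw [List.length_append, List.length_cons] at hw; omega
        have hsl : s.length ≤ N := by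
          rw [List.length_append, List.length_cons] at hw; omega
        have e : ((3 : Fin 4) :: (x ++ 2 :: s)).map (terminal : Fin 4 → Symbol (Fin 4) NTc)
            = [terminal (3 : Fin 4)] ++ (x.map terminal
              ++ ([terminal (2 : Fin 4)] ++ s.map terminal)) := by simp
        rw [e]
        exact (prod_rule
          (r := ⟨.Y, [terminal 3, nonterminal .Y, terminal 2, nonterminal .Y]⟩)
          (by simp [rulesList])).trans_derives
          (Derives_append_both (ContextFreeGrammar.Derives.refl [terminal 3])
            (Derives_append_both (ih x hxl hx hmx)
              (Derives_append_both (ContextFreeGrammar.Derives.refl [terminal 2]) (ih s hsl hHs hms))))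

end CombCF
namespace CombCF

open Symbol

lemma derSAux : ∀ (N : ℕ) (w : List (Fin 4)), w.length ≤ N → Hb w = 0 → Ac w 0 = 0 →
    gComb.Derives [nonterminal .S] (w.map terminal) := by
  intro N
  induction N with
  | zero =>
    intro w hw _ _
    have : w = [] := List.eq_nil_of_length_eq_zero (Nat.le_zero.mp hw)
    subst this
    simpa using (prod_rule (r := ⟨.S, []⟩) (by simp [rulesList])).single
  | succ N ih =>
    intro w hw hH hA
    match w with
    | [] => simpa using (prod_rule (r := ⟨.S, []⟩) (by simp [rulesList])).single
    | c :: t =>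
      simp only [List.length_cons, Nat.succ_le_succ_iff] at hw
      fin_cases c
      · show gComb.Derives [nonterminal NTc.S] (((0 : Fin 4) :: t).map terminal)
        have h1 : Hb t = 0 := by simp [dlt] at hH ⊢; omega
        have h2 : Ac t 0 < -(0:ℤ) := by simp [dlt, asg] at hA ⊢; omega
        obtain ⟨u, v, rfl, hu, hAu⟩ := firstNegAux t.length t le_rfl 0 le_rfl h1 h2
        have hHv : Hb v = 0 := by
          simp only [Hb_append, Hb_cons] at h1; simp [dlt, hu] at h1; omega
        have hAv : Ac v 0 = 0 := by
          simp only [Ac_cons, Ac_append] at hA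
          simp [dlt, asg, hu, hAu] at hA
          omega
        have hul : u.length ≤ N := by
          rw [List.length_append, List.length_cons] at hw; omega
        have hvl : v.length ≤ N := by
          rw [List.length_append, List.length_cons] at hw; omega
        have e : (((0:Fin 4)) :: (u ++ 1 :: v)).map (terminal : Fin 4 → Symbol (Fin 4) NTc)
            = [terminal (0 : Fin 4)] ++ (u.map terminal
              ++ ([terminal (1 : Fin 4)] ++ v.map terminal)) := by simp
        rw [e]
        exact (prod_rule
          (r := ⟨.S, [terminal 0, nonterminal .S, terminal 1, nonterminal .S]⟩)
          (by simp [rulesList])).trans_derives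
          (Derives_append_both (ContextFreeGrammar.Derives.refl [terminal 0])
            (Derives_append_both (ih u hul hu hAu)
              (Derives_append_both (ContextFreeGrammar.Derives.refl [terminal 1])
                (ih v hvl hHv hAv))))
      · show gComb.Derives [nonterminal NTc.S] (((1 : Fin 4) :: t).map terminal)
        have h1 : Hb t = 0 := by simp [dlt] at hH ⊢; omega
        have h2 : (0:ℤ) < Ac t 0 := by simp [dlt, asg] at hA ⊢; omega
        obtain ⟨u, v, rfl, hu, hAu⟩ := firstPosAux t.length t le_rfl 0 le_rfl h1 h2
        have hHv : Hb v = 0 := by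
          simp only [Hb_append, Hb_cons] at h1; simp [dlt, hu] at h1; omega
        have hAv : Ac v 0 = 0 := by
          simp only [Ac_cons, Ac_append] at hA
          simp [dlt, asg, hu, hAu] at hA
          omega
        have hul : u.length ≤ N := by
          rw [List.length_append, List.length_cons] at hw; omega
        have hvl : v.length ≤ N := by
          rw [List.length_append, List.length_cons] at hw; omega
        have e : (((1:Fin 4)) :: (u ++ 0 :: v)).map (terminal : Fin 4 → Symbol (Fin 4) NTc)
            = [terminal (1 : Fin 4)] ++ (u.map terminal
              ++ ([terminal (0 : Fin 4)] ++ v.map terminal)) := by simp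
        rw [e]
        exact (prod_rule
          (r := ⟨.S, [terminal 1, nonterminal .S, terminal 0, nonterminal .S]⟩)
          (by simp [rulesList])).trans_derives
          (Derives_append_both (ContextFreeGrammar.Derives.refl [terminal 1])
            (Derives_append_both (ih u hul hu hAu)
              (Derives_append_both (ContextFreeGrammar.Derives.refl [terminal 0])
                (ih v hvl hHv hAv))))
      · show gComb.Derives [nonterminal NTc.S] (((2 : Fin 4) :: t).map terminal)
        have h1 : Hb t < 0 := by simp [dlt] at hH ⊢; omega
        obtain ⟨x, s, rfl, hx, hmx⟩ := firstDrop h1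
        have hxA : Ac x (-1) = 0 := Ac_eq_zero_of_lt_mH (by omega)
        have hHs : Hb s = 0 := by
          simp only [Hb_cons, Hb_append] at hH; simp [dlt] at hH; omega
        have hAs : Ac s 0 = 0 := by
          simp only [Ac_cons, Ac_append] at hA
          simp [dlt, asg, hx, hxA] at hA
          omega
        have hxl : x.length ≤ N := by
          rw [List.length_append, List.length_cons] at hw; omega
        have hsl : s.length ≤ N := by
          rw [List.length_append, List.length_cons] at hw; omega
        have e : (((2:Fin 4)) :: (x ++ 3 :: s)).map (terminal : Fin 4 → Symbol (Fin 4) NTc)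
            = [terminal (2 : Fin 4)] ++ (x.map terminal
              ++ ([terminal (3 : Fin 4)] ++ s.map terminal)) := by simp
        rw [e]
        exact (prod_rule
          (r := ⟨.S, [terminal 2, nonterminal .X, terminal 3, nonterminal .S]⟩)
          (by simp [rulesList])).trans_derives
          (Derives_append_both (ContextFreeGrammar.Derives.refl [terminal 2])
            (Derives_append_both (derXAux x.length x le_rfl hx hmx)
              (Derives_append_both (ContextFreeGrammar.Derives.refl [terminal 3])
                (ih s hsl hHs hAs))))
      · show gComb.Derives [nonterminal NTc.S] (((3 : Fin 4) :: t).map terminal)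
        have h1 : 0 < Hb t := by simp [dlt] at hH ⊢; omega
        obtain ⟨x, s, rfl, hx, hmx⟩ := firstRise h1
        have hxA : Ac x 1 = 0 := Ac_eq_zero_of_xH_lt (by omega)
        have hHs : Hb s = 0 := by
          simp only [Hb_cons, Hb_append] at hH; simp [dlt] at hH; omega
        have hAs : Ac s 0 = 0 := by
          simp only [Ac_cons, Ac_append] at hA
          simp [dlt, asg, hx, hxA] at hA
          omega
        have hxl : x.length ≤ N := by
          rw [List.length_append, List.length_cons] at hw; omega
        have hsl : s.length ≤ N := by
          rw [List.length_append, List.length_cons] at hw; omega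
        have e : (((3:Fin 4)) :: (x ++ 2 :: s)).map (terminal : Fin 4 → Symbol (Fin 4) NTc)
            = [terminal (3 : Fin 4)] ++ (x.map terminal
              ++ ([terminal (2 : Fin 4)] ++ s.map terminal)) := by simp
        rw [e]
        exact (prod_rule
          (r := ⟨.S, [terminal 3, nonterminal .Y, terminal 2, nonterminal .S]⟩)
          (by simp [rulesList])).trans_derives
          (Derives_append_both (ContextFreeGrammar.Derives.refl [terminal 3])
            (Derives_append_both (derYAux x.length x le_rfl hx hmx)
              (Derives_append_both (ContextFreeGrammar.Derives.refl [terminal 2])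
                (ih s hsl hHs hAs))))

lemma mem_language_of_PS {w : List (Fin 4)} (h1 : Hb w = 0) (h2 : Ac w 0 = 0) :
    w ∈ gComb.language :=
  derSAux w.length w le_rfl h1 h2

end CombCF
namespace CombCF

open Symbol

def PN : NTc → List (Fin 4) → Prop
  | .S, w => Hb w = 0 ∧ Ac w 0 = 0
  | .X, w => Hb w = 0 ∧ mH w = 0
  | .Y, w => Hb w = 0 ∧ xH w = 0

def SatSym : Symbol (Fin 4) NTc → List (Fin 4) → Prop
  | terminal t, w => w = [t]
  | nonterminal A, w => PN A w

def Sat : List (Symbol (Fin 4) NTc) → List (Fin 4) → Prop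
  | [], w => w = []
  | σ :: rest, w => ∃ u v, w = u ++ v ∧ SatSym σ u ∧ Sat rest v

lemma Sat_append (s1 s2 : List (Symbol (Fin 4) NTc)) (w : List (Fin 4)) :
    Sat (s1 ++ s2) w ↔ ∃ u v, w = u ++ v ∧ Sat s1 u ∧ Sat s2 v := by
  induction s1 generalizing w with
  | nil =>
    simp only [List.nil_append]
    constructor
    · intro h; exact ⟨[], w, rfl, rfl, h⟩
    · rintro ⟨u, v, rfl, rfl, h⟩; exact h
  | cons σ rest ih =>
    constructor
    · rintro ⟨u, v, rfl, hσ, hrest⟩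
      obtain ⟨p, q, rfl, hp, hq⟩ := (ih v).mp hrest
      exact ⟨u ++ p, q, by simp, ⟨u, p, rfl, hσ, hp⟩, hq⟩
    · rintro ⟨u, v, rfl, ⟨p, q, rfl, hσ, hp⟩, hv⟩
      exact ⟨p, q ++ v, by simp, hσ, (ih _).mpr ⟨q, v, rfl, hp, hv⟩⟩

lemma Sat_terminals (w : List (Fin 4)) : Sat (w.map terminal) w := by
  induction w with
  | nil => simp [Sat]
  | cons c t ih => exact ⟨[c], t, rfl, rfl, ih⟩

lemma Sat_single (σ : Symbol (Fin 4) NTc) (w : List (Fin 4)) :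
    Sat [σ] w ↔ SatSym σ w := by
  constructor
  · rintro ⟨u, v, rfl, hσ, hv⟩
    simp only [Sat] at hv
    subst hv; simpa
  · intro h; exact ⟨w, [], by simp, h, rfl⟩

lemma rule_sound {r : ContextFreeRule (Fin 4) NTc} (hr : r ∈ gComb.rules)
    {w : List (Fin 4)} (h : Sat r.output w) : PN r.input w := by
  have hr' : r ∈ rulesList := List.mem_toFinset.mp hr
  fin_cases hr' <;> simp only [Sat, SatSym] at h ⊢
  · -- S → ε
    subst h; exact ⟨rfl, rfl⟩
  · -- S → 2 X 3 S
    obtain ⟨u1, v1, rfl, rfl, x, v2, rfl, hx, u3, v3, rfl, rfl, s, v4, rfl, hs, rfl⟩ := h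
    obtain ⟨hx1, hx2⟩ := hx
    obtain ⟨hs1, hs2⟩ := hs
    have hxA : Ac x (-1) = 0 := Ac_eq_zero_of_lt_mH (by omega)
    constructor
    · simp [Hb_append, dlt, hx1, hs1]
    · simp [Ac_append, Hb_append, dlt, asg, hx1, hxA, hs2]
  · -- S → 3 Y 2 S
    obtain ⟨u1, v1, rfl, rfl, x, v2, rfl, hx, u3, v3, rfl, rfl, s, v4, rfl, hs, rfl⟩ := h
    obtain ⟨hx1, hx2⟩ := hx
    obtain ⟨hs1, hs2⟩ := hs
    have hxA : Ac x 1 = 0 := Ac_eq_zero_of_xH_lt (by omega)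
    constructor
    · simp [Hb_append, dlt, hx1, hs1]
    · simp [Ac_append, Hb_append, dlt, asg, hx1, hxA, hs2]
  · -- S → 0 S 1 S
    obtain ⟨u1, v1, rfl, rfl, x, v2, rfl, hx, u3, v3, rfl, rfl, s, v4, rfl, hs, rfl⟩ := h
    obtain ⟨hx1, hx2⟩ := hx
    obtain ⟨hs1, hs2⟩ := hs
    constructor
    · simp [Hb_append, dlt, hx1, hs1]
    · simp [Ac_append, Hb_append, dlt, asg, hx1, hx2, hs2]
  · -- S → 1 S 0 S
    obtain ⟨u1, v1, rfl, rfl, x, v2, rfl, hx, u3, v3, rfl, rfl, s, v4, rfl, hs, rfl⟩ := h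
    obtain ⟨hx1, hx2⟩ := hx
    obtain ⟨hs1, hs2⟩ := hs
    constructor
    · simp [Hb_append, dlt, hx1, hs1]
    · simp [Ac_append, Hb_append, dlt, asg, hx1, hx2, hs2]
  · -- X → ε
    subst h; exact ⟨rfl, rfl⟩
  · -- X → 0 X
    obtain ⟨u1, v1, rfl, rfl, x, v2, rfl, hx, rfl⟩ := h
    obtain ⟨hx1, hx2⟩ := hx
    constructor
    · simp [Hb_append, dlt, hx1]
    · simp [mH_append, Hb_append, dlt, hx1, hx2]
  · -- X → 1 X
    obtain ⟨u1, v1, rfl, rfl, x, v2, rfl, hx, rfl⟩ := h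
    obtain ⟨hx1, hx2⟩ := hx
    constructor
    · simp [Hb_append, dlt, hx1]
    · simp [mH_append, Hb_append, dlt, hx1, hx2]
  · -- X → 2 X 3 X
    obtain ⟨u1, v1, rfl, rfl, x, v2, rfl, hx, u3, v3, rfl, rfl, s, v4, rfl, hs, rfl⟩ := h
    obtain ⟨hx1, hx2⟩ := hx
    obtain ⟨hs1, hs2⟩ := hs
    constructor
    · simp [Hb_append, dlt, hx1, hs1]
    · simp [mH_append, Hb_append, dlt, hx1, hx2, hs1, hs2]
  · -- Y → ε
    subst h; exact ⟨rfl, rfl⟩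
  · -- Y → 0 Y
    obtain ⟨u1, v1, rfl, rfl, x, v2, rfl, hx, rfl⟩ := h
    obtain ⟨hx1, hx2⟩ := hx
    constructor
    · simp [Hb_append, dlt, hx1]
    · simp [xH_append, Hb_append, dlt, hx1, hx2]
  · -- Y → 1 Y
    obtain ⟨u1, v1, rfl, rfl, x, v2, rfl, hx, rfl⟩ := h
    obtain ⟨hx1, hx2⟩ := hx
    constructor
    · simp [Hb_append, dlt, hx1]
    · simp [xH_append, Hb_append, dlt, hx1, hx2]
  · -- Y → 3 Y 2 Y
    obtain ⟨u1, v1, rfl, rfl, x, v2, rfl, hx, u3, v3, rfl, rfl, s, v4, rfl, hs, rfl⟩ := h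
    obtain ⟨hx1, hx2⟩ := hx
    obtain ⟨hs1, hs2⟩ := hs
    constructor
    · simp [Hb_append, dlt, hx1, hs1]
    · simp [xH_append, Hb_append, dlt, hx1, hx2, hs1, hs2]

lemma sat_of_rewrites {u v : List (Symbol (Fin 4) NTc)} {w : List (Fin 4)}
    (r : ContextFreeRule (Fin 4) NTc) (hr : r ∈ gComb.rules)
    (hrw : r.Rewrites u v) (hs : Sat v w) : Sat u w := by
  obtain ⟨p, q, rfl, rfl⟩ := hrw.exists_parts
  simp only [Sat_append] at hs
  obtain ⟨u, v, rfl, ⟨a, b, rfl, hp, hout⟩, hq⟩ := hs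
  simp only [Sat_append]
  exact ⟨a ++ b, v, by simp, ⟨a, b, rfl, hp,
    (Sat_single _ _).mpr (rule_sound hr hout)⟩, hq⟩

lemma sat_of_produces {u v : List (Symbol (Fin 4) NTc)} {w : List (Fin 4)}
    (h : gComb.Produces u v) (hs : Sat v w) : Sat u w := by
  obtain ⟨r, hr, hrw⟩ := h
  exact sat_of_rewrites r hr hrw hs

lemma derives_sat {u : List (Symbol (Fin 4) NTc)} {w : List (Fin 4)}
    (h : gComb.Derives u (w.map terminal)) : Sat u w := by
  induction h using Relation.ReflTransGen.head_induction_on with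
  | refl => exact Sat_terminals w
  | head hp _ ih => exact sat_of_produces hp ih

lemma PS_of_mem_language {w : List (Fin 4)} (h : w ∈ gComb.language) :
    Hb w = 0 ∧ Ac w 0 = 0 := by
  have := derives_sat h
  rw [Sat_single] at this
  exact this

end CombCF
namespace CombCF

def sigA : Equiv.Perm (ℤ × ℤ) where
  toFun p := if p.2 = 0 then (p.1 + 1, p.2) else p
  invFun p := if p.2 = 0 then (p.1 - 1, p.2) else p
  left_inv := by rintro ⟨a, b⟩; by_cases h : b = 0 <;> simp [h]
  right_inv := by rintro ⟨a, b⟩; by_cases h : b = 0 <;> simp [h]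

def sigB : Equiv.Perm (ℤ × ℤ) where
  toFun p := (p.1, p.2 + 1)
  invFun p := (p.1, p.2 - 1)
  left_inv p := by simp
  right_inv p := by simp

def phiC : FreeGroup (Fin 2) →* Equiv.Perm (ℤ × ℤ) := FreeGroup.lift ![sigA, sigB]

@[simp] lemma phiC_a : phiC fga = sigA := by
  simp [phiC, fga, FreeGroup.lift_apply_of]

@[simp] lemma phiC_b : phiC fgb = sigB := by
  simp [phiC, fgb, FreeGroup.lift_apply_of]

@[simp] lemma sigA_apply (p : ℤ × ℤ) :
    sigA p = if p.2 = 0 then (p.1 + 1, p.2) else p := rfl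

@[simp] lemma sigA_inv_apply (p : ℤ × ℤ) :
    sigA⁻¹ p = if p.2 = 0 then (p.1 - 1, p.2) else p := rfl

@[simp] lemma sigB_apply (p : ℤ × ℤ) : sigB p = (p.1, p.2 + 1) := rfl

@[simp] lemma sigB_inv_apply (p : ℤ × ℤ) : sigB⁻¹ p = (p.1, p.2 - 1) := rfl

lemma sigA_zpow_zero (k : ℤ) : ∀ m : ℤ, (sigA ^ k) (m, 0) = (m + k, 0) := by
  induction k using Int.induction_on with
  | zero => intro m; simp
  | succ n ih =>
    intro m
    rw [zpow_add_one, Equiv.Perm.mul_apply]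
    have : sigA (m, (0:ℤ)) = (m + 1, 0) := by simp
    rw [this, ih]
    ring_nf
  | pred n ih =>
    intro m
    rw [zpow_sub_one, Equiv.Perm.mul_apply]
    have : sigA⁻¹ (m, (0:ℤ)) = (m - 1, 0) := by simp
    rw [this, ih]
    ring_nf

lemma sigA_zpow_ne (k : ℤ) (p : ℤ × ℤ) (h : p.2 ≠ 0) : (sigA ^ k) p = p := by
  induction k using Int.induction_on with
  | zero => simp
  | succ n ih =>
    rw [zpow_add_one, Equiv.Perm.mul_apply]
    have : sigA p = p := by simp [h]
    rw [this, ih]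
  | pred n ih =>
    rw [zpow_sub_one, Equiv.Perm.mul_apply]
    have : sigA⁻¹ p = p := by simp [h]
    rw [this, ih]

lemma sigB_zpow (l : ℤ) : ∀ p : ℤ × ℤ, (sigB ^ l) p = (p.1, p.2 + l) := by
  induction l using Int.induction_on with
  | zero => intro p; simp
  | succ n ih =>
    intro p
    rw [zpow_add_one, Equiv.Perm.mul_apply, sigB_apply, ih]
    simp; ring
  | pred n ih =>
    intro p
    rw [zpow_sub_one, Equiv.Perm.mul_apply, sigB_inv_apply, ih]
    simp; ring

def repC (p : ℤ × ℤ) : FreeGroup (Fin 2) := fgb ^ p.2 * fga ^ p.1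

lemma schreier (g : FreeGroup (Fin 2)) :
    ∀ p : ℤ × ℤ, (repC (phiC g p))⁻¹ * g * repC p ∈ combSubgroup := by
  induction g using FreeGroup.induction_on with
  | C1 =>
    intro p
    have e : (repC (phiC 1 p))⁻¹ * 1 * repC p = 1 := by
      rw [map_one]; show (repC p)⁻¹ * 1 * repC p = 1; group
    rw [e]; exact one_mem _
  | of x =>
    fin_cases x
    · -- generator a
      show ∀ p : ℤ × ℤ,
        (repC (phiC (pure (0 : Fin 2)) p))⁻¹ * pure (0 : Fin 2) * repC p ∈ combSubgroup
      rintro ⟨k, l⟩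
      by_cases hl : l = 0
      · subst hl
        have e1 : phiC (pure 0 : FreeGroup (Fin 2)) (k, 0) = (k + 1, 0) := by
          show phiC fga (k, (0:ℤ)) = _
          simp
        rw [e1]
        have e2 : (repC (k + 1, 0))⁻¹ * (pure 0 : FreeGroup (Fin 2)) * repC (k, 0) = 1 := by
          show (fgb ^ (0:ℤ) * fga ^ (k+1))⁻¹ * fga * (fgb ^ (0:ℤ) * fga ^ k) = 1
          group
        rw [e2]; exact one_mem _
      · have e1 : phiC (pure 0 : FreeGroup (Fin 2)) (k, l) = (k, l) := by
          show phiC fga (k, l) = _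
          simp [hl]
        rw [e1]
        refine Subgroup.subset_closure ⟨-k, -l, neg_ne_zero.mpr hl, ?_⟩
        show (fgb ^ l * fga ^ k)⁻¹ * fga * (fgb ^ l * fga ^ k) = _
        group
    · -- generator b
      show ∀ p : ℤ × ℤ,
        (repC (phiC (pure (1 : Fin 2)) p))⁻¹ * pure (1 : Fin 2) * repC p ∈ combSubgroup
      rintro ⟨k, l⟩
      have e1 : phiC (pure 1 : FreeGroup (Fin 2)) (k, l) = (k, l + 1) := by
        show phiC fgb (k, l) = _
        simp
      rw [e1]
      have e2 : (repC (k, l + 1))⁻¹ * (pure 1 : FreeGroup (Fin 2)) * repC (k, l) = 1 := by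
        show (fgb ^ (l+1) * fga ^ k)⁻¹ * fgb * (fgb ^ l * fga ^ k) = 1
        group
      rw [e2]; exact one_mem _
  | inv_of x ih =>
    intro p
    set q := phiC (FreeGroup.of x : FreeGroup (Fin 2))⁻¹ p with hq
    have h := ih q
    have e : phiC (FreeGroup.of x : FreeGroup (Fin 2)) q = p := by
      rw [hq, map_inv]
      exact Equiv.apply_symm_apply _ p
    rw [e] at h
    have e2 : (repC q)⁻¹ * (FreeGroup.of x : FreeGroup (Fin 2))⁻¹ * repC p
        = ((repC p)⁻¹ * (FreeGroup.of x : FreeGroup (Fin 2)) * repC q)⁻¹ := by group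
    rw [e2]
    exact inv_mem h
  | mul x y ihx ihy =>
    intro p
    have e : phiC (x * y) p = phiC x (phiC y p) := by
      rw [map_mul]; rfl
    rw [e]
    have e2 : (repC (phiC x (phiC y p)))⁻¹ * (x * y) * repC p
        = ((repC (phiC x (phiC y p)))⁻¹ * x * repC (phiC y p))
          * ((repC (phiC y p))⁻¹ * y * repC p) := by group
    rw [e2]
    exact mul_mem (ihx _) (ihy _)

lemma K_fixes {g : FreeGroup (Fin 2)} (hg : g ∈ combSubgroup) :
    phiC g (0, 0) = (0, 0) := by
  induction hg using Subgroup.closure_induction with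
  | mem x hx =>
    obtain ⟨k, l, hl, rfl⟩ := hx
    have h1 : phiC (fga ^ k * fgb ^ l * fga * fgb ^ (-l) * fga ^ (-k)) ((0:ℤ), (0:ℤ))
        = (sigA ^ k) ((sigB ^ l) (sigA ((sigB ^ (-l)) ((sigA ^ (-k)) (0, 0))))) := by
      simp [map_mul, map_zpow, Equiv.Perm.mul_apply]
    have s1 : (sigA ^ (-k)) ((0:ℤ), (0:ℤ)) = (-k, 0) := by
      rw [sigA_zpow_zero]; norm_num
    have s2 : (sigB ^ (-l)) ((-k : ℤ), (0:ℤ)) = (-k, -l) := by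
      rw [sigB_zpow]; norm_num
    have s3 : sigA ((-k : ℤ), (-l : ℤ)) = (-k, -l) := by
      simp [neg_ne_zero.mpr hl]
    have s4 : (sigB ^ l) ((-k : ℤ), (-l : ℤ)) = (-k, 0) := by
      rw [sigB_zpow]; norm_num
    have s5 : (sigA ^ k) ((-k : ℤ), (0:ℤ)) = (0, 0) := by
      rw [sigA_zpow_zero]; norm_num
    rw [h1, s1, s2, s3, s4, s5]
  | one => simp
  | mul a b ha hb iha ihb =>
    rw [map_mul, Equiv.Perm.mul_apply, ihb, iha]
  | inv a ha iha =>
    rw [map_inv]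
    apply Equiv.injective (phiC a)
    rw [show ∀ q, phiC a ((phiC a)⁻¹ q) = q from Equiv.apply_symm_apply _, iha]

lemma mem_K_iff (g : FreeGroup (Fin 2)) :
    g ∈ combSubgroup ↔ phiC g (0, 0) = (0, 0) := by
  constructor
  · exact K_fixes
  · intro h
    have hs := schreier g (0, 0)
    rw [h] at hs
    simpa [repC] using hs

def act (c : Fin 4) (p : ℤ × ℤ) : ℤ × ℤ :=
  (p.1 + (if p.2 = 0 then asg c else 0), p.2 + dlt c)

def St : List (Fin 4) → ℤ × ℤ
  | [] => (0, 0)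
  | c :: t => act c (St t)

lemma phi_word (w : List (Fin 4)) : phiC ((w.map psiComb).prod) (0, 0) = St w := by
  induction w with
  | nil => simp [St]
  | cons c t ih =>
    rw [List.map_cons, List.prod_cons, map_mul, Equiv.Perm.mul_apply, ih]
    show phiC (psiComb c) (St t) = St (c :: t)
    show phiC (psiComb c) (St t) = act c (St t)
    obtain ⟨m, n⟩ := St t
    fin_cases c
    · show phiC (psiComb 0) (m, n) = act 0 (m, n)
      by_cases h : n = 0 <;> simp [psiComb, act, asg, dlt, h]
    · show phiC (psiComb 1) (m, n) = act 1 (m, n)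
      by_cases h : n = 0 <;> simp [psiComb, act, asg, dlt, map_inv, h] <;> try ring
    · show phiC (psiComb 2) (m, n) = act 2 (m, n)
      simp [psiComb, act, asg, dlt]
    · show phiC (psiComb 3) (m, n) = act 3 (m, n)
      simp [psiComb, act, asg, dlt, map_inv]
      try ring

lemma St_snd (w : List (Fin 4)) : (St w).2 = Hb w := by
  induction w with
  | nil => rfl
  | cons c t ih => simp [St, act, ih]; ring

lemma St_fst (w : List (Fin 4)) : (St w).1 = Ac w (Hb w) := by
  induction w with
  | nil => rfl
  | cons c t ih =>
    have h2 := St_snd t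
    fin_cases c <;>
      by_cases h : Hb t = 0 <;>
        simp [St, act, ih, h2, dlt, asg, h] <;> try omega

lemma mem_iff_word (w : List (Fin 4)) :
    (w.map psiComb).prod ∈ combSubgroup ↔ (Hb w = 0 ∧ Ac w 0 = 0) := by
  rw [mem_K_iff, phi_word]
  constructor
  · intro h
    have h1 := St_snd w
    have h2 := St_fst w
    rw [h] at h1 h2
    refine ⟨h1.symm, ?_⟩
    rw [← h1] at h2
    exact h2.symm
  · rintro ⟨hH, hA⟩
    have h1 := St_snd w
    have h2 := St_fst w
    rw [hH] at h1
    rw [hH, hA] at h2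
    ext
    · exact h2
    · exact h1

end CombCF


/-- The pair `(F, K)` with `F` free on `a,b` and
`K = ⟨ aᵏ bˡ a b⁻ˡ a⁻ᵏ : k, l ∈ ℤ, l ≠ 0 ⟩` is context-free. -/
theorem comb_pair_contextFree :
    Language.IsContextFree
      {w : List (Fin 4) | (w.map psiComb).prod ∈ combSubgroup} := by
  refine ⟨CombCF.gComb, ?_⟩
  ext w
  constructor
  · intro h
    exact (CombCF.mem_iff_word w).mpr (CombCF.PS_of_mem_language h)
  · intro h
    obtain ⟨h1, h2⟩ := (CombCF.mem_iff_word w).mp h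
    exact CombCF.mem_language_of_PS h1 h2
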